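/- For every transition graph T on vertex set {1,...,n} (a directed graph specifying allowed row additions/subtractions between rows, together with row multiplications/divisions by a fixed generator α of the multiplicative group of F_q), the set ops(T) generates the group GL(n,q) if and only if T is strongly connected. -/

import Mathlib

open Matrix Finset

/-- A graph is Hamilton connected if any two distinct vertices are joined by a Hamilton path. -/
def HamConn {V : Type*} [DecidableEq V] (G : SimpleGraph V) : Prop :=
  ∀ x y : V, x ≠ y → ∃ p : G.Walk x y, p.IsHamiltonian

/-- A bipartite graph is Hamilton laceable: there is a proper 2-coloring such that any two
vertices of different colors are joined by a Hamilton path. -/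
def HamLaceable {V : Type*} [DecidableEq V] (G : SimpleGraph V) : Prop :=
  ∃ c : V → Bool, (∀ ⦃x y⦄, G.Adj x y → c x ≠ c y) ∧
    ∀ x y : V, c x ≠ c y → ∃ p : G.Walk x y, p.IsHamiltonian

/-- The undirected Cayley graph of a group with connection set `S` (acting on the left). -/
def cayley {G : Type*} [Group G] (S : Set G) : SimpleGraph G :=
  SimpleGraph.fromRel (fun x y => ∃ s ∈ S, y = s * x)

/-- The set of row operations specified by a transition graph `E` on `[n]` together with
row multiplications/divisions by `α`: elementary matrices `A_{ij}`, `A_{ij}⁻¹` for edges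
`(i,j)` of `E`, and `M_i`, `M_i⁻¹` for all `i`. -/
def ops (n : ℕ) (F : Type*) [Field F] (E : Fin n → Fin n → Prop) (α : F) :
    Set (Matrix.GeneralLinearGroup (Fin n) F) :=
  {A | (∃ i j, E i j ∧ ((A : Matrix (Fin n) (Fin n) F) = 1 + Matrix.single j i 1 ∨
        (A : Matrix (Fin n) (Fin n) F) = 1 + Matrix.single j i (-1))) ∨
      (∃ i, (A : Matrix (Fin n) (Fin n) F) = 1 + Matrix.single i i (α - 1) ∨
        (A : Matrix (Fin n) (Fin n) F) = 1 + Matrix.single i i (α⁻¹ - 1))}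

/-- Bypass transition graphs: a single vertex, or obtained from a bypass transition graph
on `[n-1]` by adding the vertex `n` with an in-edge from some `i ∈ [n-1]` and an out-edge
to some `j ∈ [n-1]`. -/
inductive IsBypass : (n : ℕ) → (Fin n → Fin n → Prop) → Prop
  | single (E : Fin 1 → Fin 1 → Prop) : IsBypass 1 E
  | step (n : ℕ) (E : Fin (n + 1) → Fin (n + 1) → Prop)
      (hin : ∃ i : Fin n, E i.castSucc (Fin.last n))
      (hout : ∃ j : Fin n, E (Fin.last n) j.castSucc)
      (hrec : IsBypass n (fun a b => E a.castSucc b.castSucc)) :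
      IsBypass (n + 1) E

namespace OpsSC

variable {n : ℕ} {F : Type} [Field F]

def tu (i j : Fin n) (h : i ≠ j) (c : F) : Matrix.GeneralLinearGroup (Fin n) F :=
  ⟨transvection i j c, transvection i j (-c),
   by rw [transvection_mul_transvection_same _ _ h]; simp [transvection],
   by rw [transvection_mul_transvection_same _ _ h]; simp [transvection]⟩

@[simp] lemma tu_val (i j : Fin n) (h : i ≠ j) (c : F) :
    (tu i j h c : Matrix (Fin n) (Fin n) F) = transvection i j c := rfl

@[simp] lemma tu_inv_val (i j : Fin n) (h : i ≠ j) (c : F) :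
    ((tu i j h c)⁻¹ : Matrix.GeneralLinearGroup (Fin n) F).val = transvection i j (-c) := rfl

lemma update_one_mul (i : Fin n) (x y : F) :
    (fun a => Function.update (1 : Fin n → F) i x a * Function.update (1 : Fin n → F) i y a)
      = Function.update (1 : Fin n → F) i (x*y) := by
  funext a
  rcases eq_or_ne a i with rfl | h
  · simp
  · simp [Function.update_apply, h]

lemma update_one_one (i : Fin n) : Function.update (1 : Fin n → F) i (1:F) = 1 :=
  Function.update_eq_self i (1 : Fin n → F)

@[simp] lemma diagonal_one' : diagonal (1 : Fin n → F) = 1 := Matrix.diagonal_one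

def dui (i : Fin n) (u : Fˣ) : Matrix.GeneralLinearGroup (Fin n) F :=
  ⟨diagonal (Function.update 1 i (u:F)), diagonal (Function.update 1 i ((u⁻¹:Fˣ):F)),
   by rw [diagonal_mul_diagonal, update_one_mul]; simp [update_one_one],
   by rw [diagonal_mul_diagonal, update_one_mul]; simp [update_one_one]⟩

@[simp] lemma dui_val (i : Fin n) (u : Fˣ) :
    (dui i u : Matrix (Fin n) (Fin n) F) = diagonal (Function.update 1 i (u:F)) := rfl

@[simp] lemma dui_inv_val (i : Fin n) (u : Fˣ) :
    ((dui i u)⁻¹ : Matrix.GeneralLinearGroup (Fin n) F).val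
      = diagonal (Function.update 1 i ((u⁻¹:Fˣ):F)) := rfl

def dmh (i : Fin n) : Fˣ →* Matrix.GeneralLinearGroup (Fin n) F where
  toFun u := dui i u
  map_one' := by
    apply Units.ext
    rw [Units.val_one, dui_val]
    simp only [Units.val_one]
    rw [update_one_one]
    exact Matrix.diagonal_one
  map_mul' u v := by
    apply Units.ext
    rw [Units.val_mul, dui_val, dui_val, dui_val, diagonal_mul_diagonal, update_one_mul]
    push_cast
    rfl

lemma diagonal_update_eq (i : Fin n) (x : F) :
    diagonal (Function.update (1 : Fin n → F) i x)
      = 1 + single i i (x - 1) := by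
  ext a b
  by_cases hab : a = b
  · subst hab
    by_cases hai : a = i
    · subst hai; simp
    · simp [Matrix.one_apply, hai, Ne.symm hai, Function.update_apply]
  · rw [diagonal_apply_ne _ hab, Matrix.add_apply, Matrix.one_apply_ne hab,
      Matrix.single_apply_of_ne, add_zero]
    rintro ⟨rfl, rfl⟩
    exact hab rfl

lemma diag_std_diag (d e : Fin n → F) (i j : Fin n) (c : F) :
    diagonal d * single i j c * diagonal e = single i j (d i * c * e j) := by
  ext a b
  rw [Matrix.mul_diagonal, Matrix.diagonal_mul]
  simp only [single, of_apply]
  by_cases hai : i = a <;> by_cases hbj : j = b <;> simp [hai, hbj]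

lemma dui_conj_matrix (i j : Fin n) (h : i ≠ j) (u : Fˣ) (c : F) :
    diagonal (Function.update (1 : Fin n → F) i (u:F)) * transvection i j c *
      diagonal (Function.update (1 : Fin n → F) i ((u⁻¹:Fˣ):F))
      = transvection i j ((u:F) * c) := by
  rw [show (transvection i j c : Matrix (Fin n) (Fin n) F) = 1 + single i j c from rfl,
    mul_add, mul_one, add_mul, diag_std_diag, diagonal_mul_diagonal]
  rw [Function.update_self, Function.update_apply, if_neg (Ne.symm h)]
  rw [update_one_mul, Pi.one_apply, mul_one]
  have : ((u:F) * ((u⁻¹:Fˣ):F)) = 1 := Units.mul_inv u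
  rw [this, update_one_one, diagonal_one']
  simp [transvection]

lemma dui_conj (i j : Fin n) (h : i ≠ j) (u : Fˣ) (c : F) :
    dui i u * tu i j h c * (dui i u)⁻¹ = tu i j h ((u:F) * c) := by
  apply Units.ext
  rw [Units.val_mul, Units.val_mul, dui_val, dui_inv_val, tu_val, tu_val]
  exact dui_conj_matrix i j h u c

lemma transvection_comm {i j k : Fin n} (hjk : j ≠ k) (hki : k ≠ i) (hji : j ≠ i) (c : F) :
    transvection j k (1:F) * transvection k i c
      = transvection j i c * (transvection k i c * transvection j k 1) := by
  have e1 : single k i c * single j k (1:F) = 0 :=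
    by simp [hji.symm]
  have e2 : single j i c * single k i c = 0 :=
    by simp [hki.symm]
  have e3 : single j i c * single j k (1:F) = 0 :=
    by simp [hji.symm]
  have e4 : single j k (1:F) * single k i c = single j i (1*c) :=
    by simp
  simp only [transvection, add_mul, mul_add, one_mul, mul_one, e1, e2, e3, e4,
    mul_zero, zero_mul, add_zero, zero_add]
  abel

lemma tu_comm {i j k : Fin n} (hjk : j ≠ k) (hki : k ≠ i) (hji : j ≠ i) (c : F) :
    tu j i hji c = tu j k hjk 1 * tu k i hki c * (tu j k hjk 1)⁻¹ * (tu k i hki c)⁻¹ := by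
  have h : tu j k hjk (1:F) * tu k i hki c = tu j i hji c * (tu k i hki c * tu j k hjk 1) :=
    Units.ext (by
      simp only [Units.val_mul, tu_val]
      exact transvection_comm hjk hki hji c)
  have h2 : tu j i hji c
      = (tu j k hjk 1 * tu k i hki c) * (tu k i hki c * tu j k hjk 1)⁻¹ := by
    rw [h]; group
  rw [h2]; group

section Closure

variable (E : Fin n → Fin n → Prop) (α : Fˣ)

lemma dui_mem (hα : ∀ x : Fˣ, x ∈ Subgroup.zpowers α) (i : Fin n) (u : Fˣ) :
    dui i u ∈ Subgroup.closure (ops n F E (α:F)) := by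
  obtain ⟨k, hk⟩ := Subgroup.mem_zpowers_iff.mp (hα u)
  have hbase : dmh i α ∈ Subgroup.closure (ops n F E (α:F)) := by
    apply Subgroup.subset_closure
    refine Or.inr ⟨i, Or.inl ?_⟩
    show (dui i α : Matrix (Fin n) (Fin n) F) = _
    rw [dui_val, diagonal_update_eq]
  have heq : dui i u = (dmh i α)^k := by
    rw [← map_zpow, hk]; rfl
  rw [heq]
  exact Subgroup.zpow_mem _ hbase k

lemma tu_mem_of_edge (hα : ∀ x : Fˣ, x ∈ Subgroup.zpowers α) {i j : Fin n} (hij : E i j)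
    (h : j ≠ i) (c : F) : tu j i h c ∈ Subgroup.closure (ops n F E (α:F)) := by
  rcases eq_or_ne c 0 with rfl | hc
  · have : tu j i h (0:F) = 1 := Units.ext (by
      rw [tu_val, Units.val_one]; simp [transvection])
    rw [this]; exact one_mem _
  · have h1 : tu j i h 1 ∈ Subgroup.closure (ops n F E (α:F)) :=
      Subgroup.subset_closure (Or.inl ⟨i, j, hij, Or.inl (by rw [tu_val]; rfl)⟩)
    have hconj := dui_conj j i h (Units.mk0 c hc) 1
    rw [mul_one] at hconj
    have : tu j i h c = dui j (Units.mk0 c hc) * tu j i h 1 * (dui j (Units.mk0 c hc))⁻¹ := by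
      rw [hconj]; rfl
    rw [this]
    exact mul_mem (mul_mem (dui_mem E α hα j _) h1) (inv_mem (dui_mem E α hα j _))

lemma tu_mem (hE : ∀ i : Fin n, ¬ E i i) (hα : ∀ x : Fˣ, x ∈ Subgroup.zpowers α)
    {i j : Fin n} (hpath : Relation.ReflTransGen E i j) :
    ∀ (h : j ≠ i) (c : F), tu j i h c ∈ Subgroup.closure (ops n F E (α:F)) := by
  induction hpath with
  | refl => intro h c; exact absurd rfl h
  | @tail k j hik hkj ih =>
    intro h c
    rcases eq_or_ne i k with rfl | hik'
    · exact tu_mem_of_edge E α hα hkj h c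
    · have hjk : j ≠ k := by rintro rfl; exact hE j hkj
      have hki : k ≠ i := hik'.symm
      rw [tu_comm hjk hki h c]
      exact mul_mem (mul_mem (mul_mem (tu_mem_of_edge E α hα hkj hjk 1) (ih hki c))
        (inv_mem (tu_mem_of_edge E α hα hkj hjk 1))) (inv_mem (ih hki c))

lemma std_mulVec (i j : Fin n) (c : F) (v : Fin n → F) (a : Fin n) :
    (single i j c *ᵥ v) a = if i = a then c * v j else 0 := by
  by_cases hia : i = a <;>
    simp [mulVec, dotProduct, single, ite_and, ite_mul, hia]

lemma prod_update (D : Fin n → F) :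
    (∏ i : Fin n, Function.update (1 : Fin n → F) i (D i)) = D := by
  funext a
  rw [Finset.prod_apply]
  rw [Finset.prod_congr rfl (fun i _ => Function.update_apply (1 : Fin n → F) i (D i) a)]
  simp only [Pi.one_apply]
  rw [Finset.prod_ite_eq]
  simp

lemma list_prod_diag (D : Fin n → F) :
    ((List.ofFn (fun i => diagonal (Function.update (1 : Fin n → F) i (D i)))).prod)
      = diagonal D := by
  have h1 : (List.ofFn (fun i => diagonal (Function.update (1 : Fin n → F) i (D i))))
      = (List.ofFn (fun i => Function.update (1 : Fin n → F) i (D i))).map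
          (Matrix.diagonalRingHom (Fin n) F) := by
    rw [List.map_ofFn]; rfl
  rw [h1, ← map_list_prod (Matrix.diagonalRingHom (Fin n) F),
    List.prod_ofFn, prod_update]
  rfl

lemma units_val_list_prod {M : Type*} [Monoid M] (l : List Mˣ) :
    ((l.prod : Mˣ) : M) = (l.map (Units.val)).prod :=
  map_list_prod (Units.coeHom M) l


lemma diag_mem (hα : ∀ x : Fˣ, x ∈ Subgroup.zpowers α) (D : Fin n → F) (hD : ∀ i, D i ≠ 0)
    (u : Matrix.GeneralLinearGroup (Fin n) F)
    (hu : (u : Matrix (Fin n) (Fin n) F) = diagonal D) :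
    u ∈ Subgroup.closure (ops n F E (α:F)) := by
  have hprod : u = (List.ofFn (fun i => dui i (Units.mk0 (D i) (hD i)))).prod := by
    apply Units.ext
    rw [hu, units_val_list_prod, List.map_ofFn]
    have : (Units.val ∘ fun i => dui i (Units.mk0 (D i) (hD i)))
        = fun i => diagonal (Function.update (1 : Fin n → F) i (D i)) := by
      funext i; simp
    rw [this, list_prod_diag]
  rw [hprod]
  apply list_prod_mem
  intro x hx
  obtain ⟨i, rfl⟩ := List.mem_ofFn.mp hx
  exact dui_mem E α hα i _

lemma closure_eq_top (hE : ∀ i : Fin n, ¬ E i i) (hα : ∀ x : Fˣ, x ∈ Subgroup.zpowers α)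
    (hconn : ∀ i j : Fin n, Relation.ReflTransGen E i j) :
    Subgroup.closure (ops n F E (α:F)) = ⊤ := by
  rw [eq_top_iff]
  rintro A -
  obtain ⟨L, L', D, hM⟩ :=
    Matrix.Pivot.exists_list_transvec_mul_mul_list_transvec_eq_diagonal (A.val)
  set f : Matrix.TransvectionStruct (Fin n) F → Matrix.GeneralLinearGroup (Fin n) F :=
    fun t => tu t.i t.j t.hij t.c with hf
  have hval : ∀ (LL : List (Matrix.TransvectionStruct (Fin n) F)),
      ((LL.map f).prod).val = (LL.map Matrix.TransvectionStruct.toMatrix).prod := by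
    intro LL
    rw [units_val_list_prod, List.map_map]
    rfl
  have hmem : ∀ (LL : List (Matrix.TransvectionStruct (Fin n) F)),
      (LL.map f).prod ∈ Subgroup.closure (ops n F E (α:F)) := by
    intro LL
    apply list_prod_mem
    intro x hx
    obtain ⟨t, -, rfl⟩ := List.mem_map.mp hx
    exact tu_mem E α hE hα (hconn t.j t.i) t.hij t.c
  have hDunit : (((L.map f).prod * A * (L'.map f).prod).val) = diagonal D := by
    rw [Units.val_mul, Units.val_mul, hval, hval]; exact hM
  have hD : ∀ i, D i ≠ 0 := by
    intro i h0
    have hIU : IsUnit (diagonal D) := ⟨_, hDunit⟩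
    rw [Matrix.isUnit_iff_isUnit_det, Matrix.det_diagonal, isUnit_iff_ne_zero] at hIU
    exact hIU (Finset.prod_eq_zero (Finset.mem_univ i) h0)
  have hDm : (L.map f).prod * A * (L'.map f).prod ∈ Subgroup.closure (ops n F E (α:F)) :=
    diag_mem E α hα D hD _ hDunit
  have hA : A = ((L.map f).prod)⁻¹ * ((L.map f).prod * A * (L'.map f).prod)
      * ((L'.map f).prod)⁻¹ := by group
  rw [hA]
  exact mul_mem (mul_mem (inv_mem (hmem L)) hDm) (inv_mem (hmem L'))


lemma reverse (i j : Fin n) (hnr : ¬ Relation.ReflTransGen E i j)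
    (htop : Subgroup.closure (ops n F E (α:F)) = ⊤) : False := by
  classical
  set P : Set (Fin n) := {x | Relation.ReflTransGen E i x} with hP
  have hiP : i ∈ P := Relation.ReflTransGen.refl
  have hjP : j ∉ P := hnr
  have hij : j ≠ i := by rintro rfl; exact hnr Relation.ReflTransGen.refl
  have hclosed : ∀ {x y : Fin n}, x ∈ P → E x y → y ∈ P := fun hx he => hx.tail he
  let V : Submodule F (Fin n → F) :=
    { carrier := {v | ∀ a, a ∉ P → v a = 0}
      add_mem' := fun hx hy a ha => by
        simp only [Pi.add_apply, hx a ha, hy a ha, add_zero]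
      zero_mem' := fun a _ => rfl
      smul_mem' := fun c x hx a ha => by
        simp only [Pi.smul_apply, hx a ha, smul_zero] }
  have hVmem : ∀ (v : Fin n → F), v ∈ V ↔ ∀ a, a ∉ P → v a = 0 := fun v => Iff.rfl
  let S : Subgroup (Matrix.GeneralLinearGroup (Fin n) F) :=
    { carrier := {A | ∀ v ∈ V, A.val *ᵥ v ∈ V}
      one_mem' := fun v hv => by simpa using hv
      mul_mem' := fun {A B} hA hB v hv => by
        rw [Units.val_mul, ← mulVec_mulVec]
        exact hA _ (hB _ hv)
      inv_mem' := fun {A} hA v hv => by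
        have hres : ∀ x ∈ V, (Matrix.mulVecLin A.val) x ∈ V := fun x hx => hA x hx
        set f : V →ₗ[F] V := (Matrix.mulVecLin A.val).restrict hres with hfdef
        have hinj : Function.Injective f := by
          intro x y hxy
          have h1 : A.val *ᵥ (x : Fin n → F) = A.val *ᵥ (y : Fin n → F) :=
            congrArg Subtype.val hxy
          have h2 : (A⁻¹).val *ᵥ (A.val *ᵥ (x : Fin n → F))
              = (A⁻¹).val *ᵥ (A.val *ᵥ (y : Fin n → F)) := by rw [h1]
          rw [mulVec_mulVec, mulVec_mulVec, Units.inv_mul, one_mulVec, one_mulVec] at h2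
          exact Subtype.ext h2
        have hsurj : Function.Surjective f := (LinearMap.injective_iff_surjective).mp hinj
        obtain ⟨⟨w, hw⟩, hww⟩ := hsurj ⟨v, hv⟩
        have hAw : A.val *ᵥ w = v := congrArg Subtype.val hww
        have hfin : (A⁻¹).val *ᵥ v = w := by
          rw [← hAw, mulVec_mulVec, Units.inv_mul, one_mulVec]
        rw [show ((A⁻¹ : Matrix.GeneralLinearGroup (Fin n) F)).val *ᵥ v = w from hfin]
        exact hw }
  have hedge : ∀ (i' j' : Fin n) (c : F), E i' j' →
      ∀ v ∈ V, (1 + single j' i' c) *ᵥ v ∈ V := by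
    intro i' j' c he v hv a ha
    rw [add_mulVec, one_mulVec, Pi.add_apply, std_mulVec, hv a ha]
    by_cases h : j' = a
    · subst h
      have hi' : i' ∉ P := fun hi => ha (hclosed hi he)
      rw [if_pos rfl, hv i' hi', mul_zero, add_zero]
    · rw [if_neg h, add_zero]
  have hdiag : ∀ (i' : Fin n) (c : F), ∀ v ∈ V, (1 + single i' i' c) *ᵥ v ∈ V := by
    intro i' c v hv a ha
    rw [add_mulVec, one_mulVec, Pi.add_apply, std_mulVec, hv a ha]
    by_cases h : i' = a
    · subst h; rw [if_pos rfl, hv _ ha, mul_zero, add_zero]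
    · rw [if_neg h, add_zero]
  have hSle : Subgroup.closure (ops n F E (α:F)) ≤ S := by
    rw [Subgroup.closure_le]
    rintro A (⟨i', j', he, hval | hval⟩ | ⟨i', hval | hval⟩) <;> intro v hv <;>
      [ (rw [show A.val = _ from hval]; exact hedge i' j' 1 he v hv);
        (rw [show A.val = _ from hval]; exact hedge i' j' (-1) he v hv);
        (rw [show A.val = _ from hval]; exact hdiag i' _ v hv);
        (rw [show A.val = _ from hval]; exact hdiag i' _ v hv) ]
  have htu : tu j i hij 1 ∈ S := by
    have : tu j i hij (1:F) ∈ Subgroup.closure (ops n F E (α:F)) := by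
      rw [htop]; exact Subgroup.mem_top _
    exact hSle this
  have hv : (Pi.single i (1:F)) ∈ V := by
    intro a ha
    have hai : a ≠ i := fun h => ha (h ▸ hiP)
    exact Pi.single_eq_of_ne hai 1
  have hcontra := htu _ hv j hjP
  rw [show (tu j i hij (1:F)).val = 1 + single j i 1 from rfl,
    add_mulVec, one_mulVec, Pi.add_apply, std_mulVec, if_pos rfl] at hcontra
  rw [Pi.single_eq_of_ne hij, Pi.single_eq_same] at hcontra
  simp at hcontra

end Closure

end OpsSC

/-- `ops(T)` generates `GL(n,q)` if and only if the transition graph `T`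
is strongly connected. -/
theorem ops_generates_iff_strongly_connected
    (n q : ℕ) (hn : 1 ≤ n) (F : Type) [Field F] [Fintype F] (hq : Fintype.card F = q)
    (α : Fˣ) (hα : ∀ x : Fˣ, x ∈ Subgroup.zpowers α)
    (E : Fin n → Fin n → Prop) (hE : ∀ i : Fin n, ¬ E i i) :
    Subgroup.closure (ops n F E (α : F)) = ⊤ ↔
      ∀ i j : Fin n, Relation.ReflTransGen E i j := by
  constructor
  · intro htop i j
    by_contra hnr
    exact OpsSC.reverse E α i j hnr htop
  · intro hconn
    exact OpsSC.closure_eq_top E α hE hα hconn
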